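/- Let $n\ge 1$ and let $\lambda_1\ge\lambda_2\ge\ldots\ge\lambda_n\ge 0$ and $\mu_1\ge\mu_2\ge\ldots\ge\mu_n\ge 0$ be real numbers. Then for every $n\times n$ unitary matrix $U=(u_{jk})$ one has $\sum_{j=1}^n\sum_{k=1}^n \lambda_j\,\mu_k\,|u_{jk}|^2 \ge \sum_{j=1}^n \lambda_j\,\mu_{n+1-j}$, and equality holds for the anti-diagonal permutation matrix $U$ with entries $u_{jk}=\delta_{j+k,n+1}$. In other words, the minimum of $\sum_{j,k}\lambda_j\mu_k|u_{jk}|^2$ over the unitary group $\mathcal U(n)$ equals $\sum_{j=1}^n\lambda_j\mu_{n+1-j}$. -/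

import Mathlib

open Matrix

open Finset in
private lemma stmt1_tele (n : ℕ) (L : ℕ → ℝ) (hLn : L n = 0) (j : ℕ) (hj : j < n) :
    L j = ∑ a ∈ range n, if j ≤ a then (L a - L (a+1)) else 0 := by
  have h1 : ∑ a ∈ range n, (if j ≤ a then (L a - L (a+1)) else 0)
      = ∑ a ∈ Ico j n, (L a - L (a+1)) := by
    rw [← Finset.sum_filter]
    congr 1
    ext a
    simp [Finset.mem_filter, Finset.mem_Ico, and_comm]
  rw [h1, Finset.sum_Ico_eq_sub _ hj.le, Finset.sum_range_sub' L, Finset.sum_range_sub' L]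
  rw [hLn]
  ring

open Finset in
private lemma stmt1_sum_comm4 {M : Type*} [AddCommMonoid M] (s t u v : Finset ℕ)
    (f : ℕ → ℕ → ℕ → ℕ → M) :
    ∑ a ∈ s, ∑ b ∈ t, ∑ c ∈ u, ∑ d ∈ v, f a b c d
      = ∑ c ∈ u, ∑ d ∈ v, ∑ a ∈ s, ∑ b ∈ t, f a b c d := by
  calc ∑ a ∈ s, ∑ b ∈ t, ∑ c ∈ u, ∑ d ∈ v, f a b c d
      = ∑ a ∈ s, ∑ c ∈ u, ∑ b ∈ t, ∑ d ∈ v, f a b c d := by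
        exact Finset.sum_congr rfl fun a _ => Finset.sum_comm
    _ = ∑ c ∈ u, ∑ a ∈ s, ∑ b ∈ t, ∑ d ∈ v, f a b c d := Finset.sum_comm
    _ = ∑ c ∈ u, ∑ a ∈ s, ∑ d ∈ v, ∑ b ∈ t, f a b c d := by
        exact Finset.sum_congr rfl fun c _ => Finset.sum_congr rfl fun a _ => Finset.sum_comm
    _ = ∑ c ∈ u, ∑ d ∈ v, ∑ a ∈ s, ∑ b ∈ t, f a b c d := by
        exact Finset.sum_congr rfl fun c _ => Finset.sum_comm

open Finset in
private lemma stmt1_core (n : ℕ) (L M : ℕ → ℝ) (P : ℕ → ℕ → ℝ)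
    (hL : Antitone L) (hM : Antitone M)
    (hLn : L n = 0) (hMn : M n = 0)
    (hP0 : ∀ j k, 0 ≤ P j k)
    (hrow : ∀ j < n, ∑ k ∈ range n, P j k = 1)
    (hcol : ∀ k < n, ∑ j ∈ range n, P j k = 1) :
    ∑ j ∈ range n, L j * M (n - 1 - j) ≤
      ∑ j ∈ range n, ∑ k ∈ range n, L j * M k * P j k := by
  set α : ℕ → ℝ := fun a => L a - L (a+1) with hα
  set β : ℕ → ℝ := fun b => M b - M (b+1) with hβ
  have hα0 : ∀ a, 0 ≤ α a := fun a => by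
    simp only [hα]; have := hL (Nat.le_succ a); linarith
  have hβ0 : ∀ b, 0 ≤ β b := fun b => by
    simp only [hβ]; have := hM (Nat.le_succ b); linarith
  set S : ℕ → ℕ → ℝ := fun a b =>
    ∑ j ∈ range n, ∑ k ∈ range n, if j ≤ a ∧ k ≤ b then P j k else 0 with hS
  set T : ℕ → ℕ → ℝ := fun a b =>
    ∑ j ∈ range n, if j ≤ a ∧ n - 1 - j ≤ b then (1:ℝ) else 0 with hT
  have key : ∀ (Q : ℕ → ℕ → ℝ) (j k : ℕ), j < n → k < n →
      L j * M k * Q j k = ∑ a ∈ range n, ∑ b ∈ range n,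
        (if j ≤ a ∧ k ≤ b then α a * β b * Q j k else 0) := by
    intro Q j k hj hk
    rw [stmt1_tele n L hLn j hj, stmt1_tele n M hMn k hk, Finset.sum_mul_sum, Finset.sum_mul]
    refine Finset.sum_congr rfl fun a _ => ?_
    rw [Finset.sum_mul]
    refine Finset.sum_congr rfl fun b _ => ?_
    by_cases h1 : j ≤ a <;> by_cases h2 : k ≤ b <;> simp [h1, h2, hα, hβ]
  have hRHS : ∑ j ∈ range n, ∑ k ∈ range n, L j * M k * P j k
      = ∑ a ∈ range n, ∑ b ∈ range n, α a * β b * S a b := by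
    have e1 : ∑ j ∈ range n, ∑ k ∈ range n, L j * M k * P j k
        = ∑ j ∈ range n, ∑ k ∈ range n, ∑ a ∈ range n, ∑ b ∈ range n,
            (if j ≤ a ∧ k ≤ b then α a * β b * P j k else 0) := by
      refine Finset.sum_congr rfl fun j hj => Finset.sum_congr rfl fun k hk => ?_
      exact key P j k (mem_range.mp hj) (mem_range.mp hk)
    rw [e1, stmt1_sum_comm4]
    refine Finset.sum_congr rfl fun a _ => Finset.sum_congr rfl fun b _ => ?_
    simp only [hS, Finset.mul_sum, mul_ite, mul_zero]
  have hLHS : ∑ j ∈ range n, L j * M (n - 1 - j)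
      = ∑ a ∈ range n, ∑ b ∈ range n, α a * β b * T a b := by
    have e1 : ∑ j ∈ range n, L j * M (n - 1 - j)
        = ∑ j ∈ range n, ∑ a ∈ range n, ∑ b ∈ range n,
            (if j ≤ a ∧ n - 1 - j ≤ b then α a * β b * 1 else 0) := by
      refine Finset.sum_congr rfl fun j hj => ?_
      have hj' := mem_range.mp hj
      have := key (fun _ _ => (1:ℝ)) j (n - 1 - j) hj' (by omega)
      simpa using this
    rw [e1, Finset.sum_comm]
    refine Finset.sum_congr rfl fun a _ => ?_
    rw [Finset.sum_comm]
    refine Finset.sum_congr rfl fun b _ => ?_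
    simp only [hT, Finset.mul_sum, mul_ite, mul_zero, mul_one]
  rw [hLHS, hRHS]
  refine Finset.sum_le_sum fun a ha => Finset.sum_le_sum fun b hb => ?_
  have han := mem_range.mp ha
  have hbn := mem_range.mp hb
  refine mul_le_mul_of_nonneg_left ?_ (mul_nonneg (hα0 a) (hβ0 b))
  have hS0 : 0 ≤ S a b := Finset.sum_nonneg fun j _ => Finset.sum_nonneg fun k _ => by
    split_ifs; exacts [hP0 j k, le_refl 0]
  have hTval : T a b = ((a + 1 - (n - 1 - b) : ℕ) : ℝ) := by
    simp only [hT, Finset.sum_boole]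
    congr 1
    have : (range n).filter (fun j => j ≤ a ∧ n - 1 - j ≤ b) = Finset.Icc (n - 1 - b) a := by
      ext j
      simp only [Finset.mem_filter, Finset.mem_range, Finset.mem_Icc]
      omega
    rw [this, Nat.card_Icc]
  by_cases hcase : a + b + 2 ≤ n
  · have : T a b = 0 := by rw [hTval]; norm_cast; omega
    rw [this]; exact hS0
  · have inner1 : ∀ j, j < n → ∑ k ∈ range n, (if k ≤ b then P j k else 0)
        = 1 - ∑ k ∈ range n, (if b < k then P j k else 0) := by
      intro j hj
      have hsplit : ∑ k ∈ range n, ((if k ≤ b then P j k else 0) + (if b < k then P j k else 0))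
          = ∑ k ∈ range n, P j k := by
        refine Finset.sum_congr rfl fun k _ => ?_
        by_cases h : k ≤ b
        · simp [h, Nat.not_lt.mpr h]
        · simp [h, Nat.lt_of_not_le (fun hh => h hh)]
      rw [Finset.sum_add_distrib, hrow j hj] at hsplit
      linarith
    have hSsplit : S a b = ∑ j ∈ range n,
        (if j ≤ a then (1 - ∑ k ∈ range n, (if b < k then P j k else 0)) else 0) := by
      simp only [hS]
      refine Finset.sum_congr rfl fun j hj => ?_
      by_cases h : j ≤ a
      · simp only [h, true_and, if_true]
        exact inner1 j (mem_range.mp hj)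
      · simp [h]
    have hCa : ∑ j ∈ range n, (if j ≤ a then (1:ℝ) else 0) = (a + 1 : ℕ) := by
      rw [Finset.sum_boole]
      congr 1
      have : (range n).filter (fun j => j ≤ a) = range (a + 1) := by
        ext j; simp only [Finset.mem_filter, Finset.mem_range]; omega
      rw [this, Finset.card_range]
    have hcolsum : ∑ j ∈ range n, ∑ k ∈ range n, (if b < k then P j k else 0)
        = ((n - (b + 1) : ℕ) : ℝ) := by
      rw [Finset.sum_comm]
      have e : ∀ k ∈ range n, ∑ j ∈ range n, (if b < k then P j k else 0)
          = (if b < k then (1:ℝ) else 0) := by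
        intro k hk
        by_cases h : b < k
        · simp only [h, if_true]; exact hcol k (mem_range.mp hk)
        · simp [h]
      rw [Finset.sum_congr rfl e, Finset.sum_boole]
      congr 1
      have : (range n).filter (fun k => b < k) = Finset.Ico (b+1) n := by
        ext k; simp only [Finset.mem_filter, Finset.mem_range, Finset.mem_Ico]; omega
      rw [this, Nat.card_Ico]
    have hbound : ((a + 1 : ℕ) : ℝ) - ((n - (b+1) : ℕ) : ℝ) ≤ S a b := by
      rw [hSsplit]
      have : ∑ j ∈ range n, (if j ≤ a then (1 - ∑ k ∈ range n, (if b < k then P j k else 0)) else 0)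
          = ∑ j ∈ range n, ((if j ≤ a then (1:ℝ) else 0)
              - (if j ≤ a then (∑ k ∈ range n, (if b < k then P j k else 0)) else 0)) := by
        refine Finset.sum_congr rfl fun j _ => ?_
        by_cases h : j ≤ a <;> simp [h]
      rw [this, Finset.sum_sub_distrib, hCa]
      have hle : ∑ j ∈ range n, (if j ≤ a then (∑ k ∈ range n, (if b < k then P j k else 0)) else 0)
          ≤ ∑ j ∈ range n, ∑ k ∈ range n, (if b < k then P j k else 0) := by
        refine Finset.sum_le_sum fun j _ => ?_
        by_cases h : j ≤ a
        · simp [h]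
        · simp only [h, if_false]
          exact Finset.sum_nonneg fun k _ => by split_ifs; exacts [hP0 j k, le_refl 0]
      rw [← hcolsum] at *
      linarith
    rw [hTval]
    have h1 : (a + 1 - (n - 1 - b) : ℕ) = a + b + 2 - n := by omega
    rw [h1]
    have : ((a + b + 2 - n : ℕ) : ℝ) = ((a+1:ℕ):ℝ) - ((n - (b+1) : ℕ):ℝ) := by
      push_cast [Nat.cast_sub (by omega : b + 1 ≤ n), Nat.cast_sub (by omega : n ≤ a + b + 2)]
      ring
    rw [this]
    exact hbound

private lemma stmt1_rowsum (n : ℕ) (U : Matrix (Fin n) (Fin n) ℂ)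
    (hU : U ∈ Matrix.unitaryGroup (Fin n) ℂ)
    (j : Fin n) : ∑ k : Fin n, ‖U j k‖^2 = 1 := by
  have h1 : U * Uᴴ = 1 := by
    have := Matrix.mem_unitaryGroup_iff.mp hU
    rwa [Matrix.star_eq_conjTranspose] at this
  have h2 := congrFun (congrFun h1 j) j
  rw [Matrix.mul_apply] at h2
  simp only [Matrix.conjTranspose_apply, Matrix.one_apply_eq] at h2
  have h3 : ∑ k : Fin n, ((‖U j k‖^2 : ℝ) : ℂ) = 1 := by
    rw [← h2]
    refine Finset.sum_congr rfl fun k _ => ?_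
    rw [Complex.ofReal_pow, ← Complex.mul_conj']; rfl
  exact_mod_cast h3

private lemma stmt1_colsum (n : ℕ) (U : Matrix (Fin n) (Fin n) ℂ)
    (hU : U ∈ Matrix.unitaryGroup (Fin n) ℂ)
    (k : Fin n) : ∑ j : Fin n, ‖U j k‖^2 = 1 := by
  have h1 : Uᴴ * U = 1 := by
    have := Matrix.mem_unitaryGroup_iff'.mp hU
    rwa [Matrix.star_eq_conjTranspose] at this
  have h2 := congrFun (congrFun h1 k) k
  rw [Matrix.mul_apply] at h2
  simp only [Matrix.conjTranspose_apply, Matrix.one_apply_eq] at h2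
  have h3 : ∑ j : Fin n, ((‖U j k‖^2 : ℝ) : ℂ) = 1 := by
    rw [← h2]
    refine Finset.sum_congr rfl fun j _ => ?_
    rw [mul_comm, Complex.ofReal_pow, ← Complex.mul_conj']; rfl
  exact_mod_cast h3

theorem stmt_1 (n : ℕ) (hn : 1 ≤ n) (lam mu : Fin n → ℝ)
    (hlam_mono : Antitone lam) (hlam0 : ∀ j, 0 ≤ lam j)
    (hmu_mono : Antitone mu) (hmu0 : ∀ k, 0 ≤ mu k) :
    (∀ U ∈ Matrix.unitaryGroup (Fin n) ℂ,
      ∑ j : Fin n, lam j * mu (j.rev) ≤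
        ∑ j : Fin n, ∑ k : Fin n, lam j * mu k * ‖U j k‖ ^ 2) ∧
    ((fun j k : Fin n => if k = j.rev then (1 : ℂ) else 0) ∈
        Matrix.unitaryGroup (Fin n) ℂ ∧
      ∑ j : Fin n, ∑ k : Fin n, lam j * mu k *
          ‖(if k = j.rev then (1 : ℂ) else 0)‖ ^ 2 =
        ∑ j : Fin n, lam j * mu (j.rev)) ∧
    IsLeast {x : ℝ | ∃ U ∈ Matrix.unitaryGroup (Fin n) ℂ,
        x = ∑ j : Fin n, ∑ k : Fin n, lam j * mu k * ‖U j k‖ ^ 2}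
      (∑ j : Fin n, lam j * mu (j.rev)) := by
  classical
  -- extensions to ℕ
  set L : ℕ → ℝ := fun i => if h : i < n then lam ⟨i, h⟩ else 0 with hLdef
  set Mu : ℕ → ℝ := fun i => if h : i < n then mu ⟨i, h⟩ else 0 with hMdef
  have hLanti : Antitone L := by
    intro i j hij
    simp only [hLdef]
    split_ifs with h1 h2 h2
    · exact hlam_mono (Fin.mk_le_mk.mpr hij)
    · omega
    · exact hlam0 _
    · exact le_refl 0
  have hManti : Antitone Mu := by
    intro i j hij
    simp only [hMdef]
    split_ifs with h1 h2 h2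
    · exact hmu_mono (Fin.mk_le_mk.mpr hij)
    · omega
    · exact hmu0 _
    · exact le_refl 0
  have hLn : L n = 0 := by simp [hLdef]
  have hMn : Mu n = 0 := by simp [hMdef]
  have hLval : ∀ j : Fin n, L (j : ℕ) = lam j := by
    intro j; simp only [hLdef]; rw [dif_pos j.isLt]
  have hMval : ∀ k : Fin n, Mu (k : ℕ) = mu k := by
    intro k; simp only [hMdef]; rw [dif_pos k.isLt]
  have hMrev : ∀ j : Fin n, Mu (n - 1 - (j : ℕ)) = mu j.rev := by
    intro j
    simp only [hMdef]
    rw [dif_pos (show n - 1 - (j : ℕ) < n by omega)]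
    congr 1
    apply Fin.ext
    simp only [Fin.val_rev]
    omega
  -- Part 1
  have part1 : ∀ U ∈ Matrix.unitaryGroup (Fin n) ℂ,
      ∑ j : Fin n, lam j * mu (j.rev) ≤
        ∑ j : Fin n, ∑ k : Fin n, lam j * mu k * ‖U j k‖ ^ 2 := by
    intro U hU
    set P : ℕ → ℕ → ℝ := fun j k =>
      if h : j < n ∧ k < n then ‖U ⟨j, h.1⟩ ⟨k, h.2⟩‖^2 else 0 with hPdef
    have hP0 : ∀ j k, 0 ≤ P j k := by
      intro j k; simp only [hPdef]; split_ifs <;> positivity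
    have hPval : ∀ (j k : Fin n), P (j : ℕ) (k : ℕ) = ‖U j k‖^2 := by
      intro j k
      simp only [hPdef]
      rw [dif_pos ⟨j.isLt, k.isLt⟩]
    have hrow : ∀ j < n, ∑ k ∈ Finset.range n, P j k = 1 := by
      intro j hj
      rw [← Fin.sum_univ_eq_sum_range (fun k => P j k) n]
      rw [show (∑ k : Fin n, P j (k : ℕ)) = ∑ k : Fin n, ‖U ⟨j, hj⟩ k‖^2 from
        Finset.sum_congr rfl fun k _ => by
          simp only [hPdef]; rw [dif_pos ⟨hj, k.isLt⟩]]
      exact stmt1_rowsum n U hU ⟨j, hj⟩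
    have hcol : ∀ k < n, ∑ j ∈ Finset.range n, P j k = 1 := by
      intro k hk
      rw [← Fin.sum_univ_eq_sum_range (fun j => P j k) n]
      rw [show (∑ j : Fin n, P (j : ℕ) k) = ∑ j : Fin n, ‖U j ⟨k, hk⟩‖^2 from
        Finset.sum_congr rfl fun j _ => by
          simp only [hPdef]; rw [dif_pos ⟨j.isLt, hk⟩]]
      exact stmt1_colsum n U hU ⟨k, hk⟩
    have main := stmt1_core n L Mu P hLanti hManti hLn hMn hP0 hrow hcol
    have c1 : ∑ j : Fin n, lam j * mu (j.rev)
        = ∑ j ∈ Finset.range n, L j * Mu (n - 1 - j) := by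
      rw [← Fin.sum_univ_eq_sum_range (fun j => L j * Mu (n - 1 - j)) n]
      refine Finset.sum_congr rfl fun j _ => ?_
      rw [hLval j, hMrev j]
    have c2 : ∑ j : Fin n, ∑ k : Fin n, lam j * mu k * ‖U j k‖ ^ 2
        = ∑ j ∈ Finset.range n, ∑ k ∈ Finset.range n, L j * Mu k * P j k := by
      rw [← Fin.sum_univ_eq_sum_range
        (fun j => ∑ k ∈ Finset.range n, L j * Mu k * P j k) n]
      refine Finset.sum_congr rfl fun j _ => ?_
      rw [← Fin.sum_univ_eq_sum_range (fun k => L (j : ℕ) * Mu k * P (j : ℕ) k) n]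
      refine Finset.sum_congr rfl fun k _ => ?_
      rw [hLval j, hMval k, hPval j k]
    rw [c1, c2]
    exact main
  -- Part 2 : the permutation matrix
  have mem2 : (fun j k : Fin n => if k = j.rev then (1 : ℂ) else 0) ∈
      Matrix.unitaryGroup (Fin n) ℂ := by
    show (Matrix.of fun j k : Fin n => if k = j.rev then (1 : ℂ) else 0) ∈ Matrix.unitaryGroup (Fin n) ℂ
    rw [Matrix.mem_unitaryGroup_iff, Matrix.star_eq_conjTranspose]
    ext i j
    simp only [Matrix.mul_apply, Matrix.conjTranspose_apply, Matrix.one_apply]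
    simp [Finset.sum_ite_eq', Fin.rev_inj, eq_comm, apply_ite (starRingEnd ℂ)]
  have eq2 : ∑ j : Fin n, ∑ k : Fin n, lam j * mu k *
        ‖(if k = j.rev then (1 : ℂ) else 0)‖ ^ 2 =
      ∑ j : Fin n, lam j * mu (j.rev) := by
    refine Finset.sum_congr rfl fun j _ => ?_
    rw [Finset.sum_eq_single j.rev]
    · simp
    · intro k _ hk; simp [hk]
    · simp
  refine ⟨part1, ⟨mem2, eq2⟩, ?_, ?_⟩
  · exact ⟨_, mem2, eq2.symm⟩
  · rintro x ⟨U, hU, rfl⟩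
    exact part1 U hU
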